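/- For every integer k ≥ 1, E f_k(𝒯) = k(k+3)/((k+1)(k+2)) · 2^{k−1}/k! = 2^{k−1}/k! − 2^k/(k+2)!, where 𝒯 is the random binary search tree with random size distributed as P(|𝒯| = n) = 2/((n+1)(n+2)) for n ≥ 1, and f_k(T) is the number of green chains of length k in T starting at the root. -/

import Mathlib

open MeasureTheory

inductive BTree : Type
  | nil : BTree
  | node : BTree → BTree → BTree
deriving DecidableEq

namespace BTree

instance : MeasurableSpace BTree := ⊤

def size : BTree → ℕ
  | nil => 0
  | node l r => size l + size r + 1

def left : BTree → BTree
  | nil => nil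
  | node l _ => l

def right : BTree → BTree
  | nil => nil
  | node _ r => r

/-- The number of maximal green nodes (green = outdegree ≤ 1, maximal = no green
strict ancestor): a green root gives the unique maximal green node. -/
def F : BTree → ℕ
  | nil => 0
  | node l r => if l = nil ∨ r = nil then 1 else F l + F r

/-- The toll function `f(T) = F(T) - F(T_L) - F(T_R)`. -/
def f : BTree → ℤ
  | nil => 0
  | node nil r => 1 - F r
  | node l nil => 1 - F l
  | node _ _ => 0

/-- The list of all subtrees `T_v` rooted at nodes `v` of `T`. -/
def subtrees : BTree → List BTree
  | nil => []
  | node l r => node l r :: (subtrees l ++ subtrees r)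

/-- The root is green: the tree is nonempty and has at most one root child. -/
def greenRoot : BTree → Prop
  | nil => False
  | node l r => l = nil ∨ r = nil

instance : DecidablePred greenRoot := fun t => by
  cases t <;> simp [greenRoot] <;> infer_instance

/-- The random binary search tree with `n` nodes. -/
noncomputable def bst : ℕ → PMF BTree
  | 0 => PMF.pure nil
  | n + 1 =>
    (PMF.uniformOfFintype (Fin (n + 1))).bind fun i =>
      (bst i.val).bind fun l => (bst (n - i.val)).bind fun r => PMF.pure (node l r)
  decreasing_by
    · exact i.isLt
    · omega

/-- `fchain k T` is the number of green chains of length `k` in `T` starting at the root. -/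
def fchain : ℕ → BTree → ℕ
  | 0, _ => 0
  | 1, nil => 0
  | 1, node l r => if l = nil ∨ r = nil then 1 else 0
  | _ + 2, nil => 0
  | k + 2, node l r =>
    if l = nil ∨ r = nil then
      ((subtrees l).map (fun t => fchain (k + 1) t)).sum
        + ((subtrees r).map (fun t => fchain (k + 1) t)).sum
    else 0
  termination_by k _ => k

/-- `Fchain k T` is the total number of green chains of length `k` in `T`. -/
def Fchain (k : ℕ) (T : BTree) : ℕ := ((subtrees T).map (fchain k)).sum

end BTree

open BTree in
/-- The random binary search tree `𝒯` with random size, `P(|𝒯| = n) = 2/((n+1)(n+2))`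
for `n ≥ 1` (indexed below by `n+1`). -/
noncomputable def cT : MeasureTheory.Measure BTree :=
  MeasureTheory.Measure.sum fun n : ℕ =>
    (ENNReal.ofReal (2 / (((n : ℝ) + 2) * ((n : ℝ) + 3)))) • (BTree.bst (n + 1)).toMeasure

namespace BTreeAux
open BTree
open scoped ENNReal

def enc : BTree → ℕ
  | BTree.nil => 0
  | BTree.node l r => Nat.pair (enc l) (enc r) + 1

lemma enc_inj : ∀ t s : BTree, enc t = enc s → t = s := by
  intro t
  induction t with
  | nil => intro s; cases s <;> simp [enc]
  | node l r ihl ihr =>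
    intro s; cases s with
    | nil => simp [enc]
    | node l' r' =>
      simp only [enc, add_left_inj]
      intro h
      have h2 := Nat.pair_eq_pair.mp h
      rw [ihl _ h2.1, ihr _ h2.2]

instance : Countable BTree := (countable_iff_exists_injective BTree).mpr ⟨enc, fun _ _ h => enc_inj _ _ h⟩

instance : MeasurableSingletonClass BTree := ⟨fun _ => MeasurableSpace.measurableSet_top⟩

lemma meas (f : BTree → ℝ) : Measurable f := fun _ _ => MeasurableSpace.measurableSet_top

/-- expectation functional on PMFs -/
noncomputable def Ex {α : Type*} (p : PMF α) (f : α → ℝ≥0∞) : ℝ≥0∞ := ∑' t, p t * f t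

lemma lintegral_toMeasure (p : PMF BTree) (f : BTree → ℝ≥0∞) :
    ∫⁻ t, f t ∂p.toMeasure = Ex p f := by
  rw [MeasureTheory.lintegral_countable' f]
  exact tsum_congr fun a => by
    rw [PMF.toMeasure_apply_singleton _ _ (measurableSet_singleton a), mul_comm]

lemma Ex_pure {α : Type*} (b : α) (f : α → ℝ≥0∞) : Ex (PMF.pure b) f = f b := by
  rw [Ex, tsum_eq_single b]
  · simp [PMF.pure_apply]
  · intro c hc; simp [PMF.pure_apply, hc]

lemma Ex_bind {α β : Type*} (p : PMF α) (q : α → PMF β) (f : β → ℝ≥0∞) :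
    Ex (p.bind q) f = ∑' a, p a * Ex (q a) f := by
  calc Ex (p.bind q) f = ∑' t, ∑' a, p a * (q a) t * f t :=
        tsum_congr fun t => by rw [PMF.bind_apply, ENNReal.tsum_mul_right]
  _ = ∑' a, ∑' t, p a * (q a) t * f t := ENNReal.tsum_comm
  _ = ∑' a, p a * Ex (q a) f := tsum_congr fun a => by
        simp only [Ex]; rw [← ENNReal.tsum_mul_left]
        exact tsum_congr fun t => by ring

lemma Ex_const {α : Type*} (p : PMF α) (c : ℝ≥0∞) : Ex p (fun _ => c) = c := by
  rw [Ex, ENNReal.tsum_mul_right, PMF.tsum_coe, one_mul]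

lemma Ex_add {α : Type*} (p : PMF α) (f g : α → ℝ≥0∞) :
    Ex p (fun t => f t + g t) = Ex p f + Ex p g := by
  simp only [Ex, mul_add]
  exact ENNReal.tsum_add

lemma Ex_congr {α : Type*} (p : PMF α) (f g : α → ℝ≥0∞) (h : ∀ t, p t ≠ 0 → f t = g t) :
    Ex p f = Ex p g := by
  refine tsum_congr fun t => ?_
  by_cases ht : p t = 0
  · simp [ht]
  · rw [h t ht]


lemma bst_zero : bst 0 = PMF.pure BTree.nil := by rw [bst]

lemma bst_succ (n : ℕ) : bst (n + 1) =
    (PMF.uniformOfFintype (Fin (n + 1))).bind fun i =>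
      (bst i.val).bind fun l => (bst (n - i.val)).bind fun r => PMF.pure (node l r) := by
  rw [bst]

lemma Ex_bst_succ (n : ℕ) (f : BTree → ℝ≥0∞) :
    Ex (bst (n + 1)) f = (n + 1 : ℝ≥0∞)⁻¹ *
      ∑ i ∈ Finset.range (n + 1),
        Ex (bst i) (fun l => Ex (bst (n - i)) (fun r => f (node l r))) := by
  rw [bst_succ, Ex_bind]
  rw [tsum_fintype]
  have : ∀ i : Fin (n+1), (PMF.uniformOfFintype (Fin (n + 1))) i = (n + 1 : ℝ≥0∞)⁻¹ := by
    intro i; simp [PMF.uniformOfFintype_apply]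
  simp only [this]
  rw [← Finset.mul_sum]
  congr 1
  rw [← Fin.sum_univ_eq_sum_range (fun i =>
      Ex (bst i) (fun l => Ex (bst (n - i)) (fun r => f (node l r))))]
  refine Finset.sum_congr rfl fun i _ => ?_
  rw [Ex_bind]
  refine Ex_congr _ _ _ fun l _ => ?_
  rw [Ex_bind]
  refine Ex_congr _ _ _ fun r _ => ?_
  rw [Ex_pure]

lemma size_eq_zero {t : BTree} (h : t.size = 0) : t = BTree.nil := by
  cases t with
  | nil => rfl
  | node l r => simp [BTree.size] at h

lemma bst_size : ∀ n, ∀ t : BTree, t ∈ (bst n).support → t.size = n := by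
  intro n
  induction n using Nat.strong_induction_on with
  | _ n ih =>
    match n with
    | 0 =>
      intro t ht
      rw [bst_zero, PMF.support_pure] at ht
      simp only [Set.mem_singleton_iff] at ht
      simp [ht, BTree.size]
    | n + 1 =>
      intro t ht
      rw [bst_succ, PMF.mem_support_bind_iff] at ht
      obtain ⟨i, -, ht⟩ := ht
      rw [PMF.mem_support_bind_iff] at ht
      obtain ⟨l, hl, ht⟩ := ht
      rw [PMF.mem_support_bind_iff] at ht
      obtain ⟨r, hr, ht⟩ := ht
      rw [PMF.support_pure, Set.mem_singleton_iff] at ht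
      subst ht
      have hl' := ih i.val i.isLt l hl
      have hr' := ih (n - i.val) (by omega) r hr
      have : i.val ≤ n := by omega
      simp [BTree.size, hl', hr']
      omega

lemma bst_pos_ne_nil {n : ℕ} (hn : 1 ≤ n) {t : BTree} (ht : (bst n) t ≠ 0) :
    t ≠ BTree.nil := by
  intro h
  have := bst_size n t ((PMF.mem_support_iff _ _).mpr ht)
  rw [h] at this
  simp [BTree.size] at this
  omega

lemma Fchain_nil (k : ℕ) : Fchain k BTree.nil = 0 := rfl

lemma Fchain_node (k : ℕ) (l r : BTree) :
    Fchain k (node l r) = fchain k (node l r) + Fchain k l + Fchain k r := by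
  simp [Fchain, subtrees, add_assoc]

lemma fchain_succ_node (k : ℕ) (l r : BTree) :
    fchain (k + 2) (node l r) =
      if l = BTree.nil ∨ r = BTree.nil then Fchain (k + 1) l + Fchain (k + 1) r else 0 := by
  rw [fchain]; rfl

/-- ENNReal expected values -/
noncomputable def EL (k n : ℕ) : ℝ≥0∞ := Ex (bst n) (fun t => (fchain k t : ℝ≥0∞))
noncomputable def EM (k n : ℕ) : ℝ≥0∞ := Ex (bst n) (fun t => (Fchain k t : ℝ≥0∞))

lemma EL_zero (k : ℕ) : EL k 0 = 0 := by
  rw [EL, bst_zero, Ex_pure]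
  cases k with
  | zero => simp [fchain]
  | succ k => cases k <;> simp [fchain]

lemma EM_zero (k : ℕ) : EM k 0 = 0 := by
  rw [EM, bst_zero, Ex_pure, Fchain_nil]; simp

lemma EL_zero' (n : ℕ) : EL 0 n = 0 := by
  rw [EL]
  have : ∀ t : BTree, ((fchain 0 t : ℝ≥0∞)) = 0 := fun t => by simp [fchain]
  simp only [this]
  exact Ex_const (bst n) 0

lemma EM_one (n : ℕ) : EM 1 0 = 0 := EM_zero 1

lemma fchain_one_node (l r : BTree) :
    fchain 1 (node l r) = if l = BTree.nil ∨ r = BTree.nil then 1 else 0 := by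
  rw [fchain]

lemma sum_ends (g : ℕ → ℝ≥0∞) (n : ℕ) (hn : 1 ≤ n)
    (hmid : ∀ i, 1 ≤ i → i < n → g i = 0) :
    ∑ i ∈ Finset.range (n + 1), g i = g 0 + g n := by
  rw [Finset.sum_range_succ, Finset.range_eq_Ico,
    Finset.sum_eq_sum_Ico_succ_bot (by omega : 0 < n)]
  have : ∑ i ∈ Finset.Ico 1 n, g i = 0 := by
    refine Finset.sum_eq_zero fun i hi => ?_
    rw [Finset.mem_Ico] at hi
    exact hmid i hi.1 hi.2
  rw [this, add_zero]

lemma EL_one (n : ℕ) :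
    EL 1 (n + 1) = (n + 1 : ℝ≥0∞)⁻¹ * (if n = 0 then 1 else 2) := by
  rw [EL, Ex_bst_succ]
  congr 1
  rcases Nat.eq_zero_or_pos n with hn | hn
  · subst hn
    rw [if_pos rfl, Finset.sum_range_one]
    simp [bst_zero, Ex_pure, fchain_one_node]
  · rw [if_neg (by omega)]
    rw [sum_ends _ n hn ?_]
    · have h0 : Ex (bst 0) (fun l => Ex (bst (n - 0)) fun r => ((fchain 1 (node l r) : ℕ) : ℝ≥0∞)) = 1 := by
        rw [bst_zero, Ex_pure]
        have : ∀ r : BTree, ((fchain 1 (node BTree.nil r) : ℕ) : ℝ≥0∞) = 1 := by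
          intro r; rw [fchain_one_node, if_pos (Or.inl rfl)]; simp
        simp only [this]
        exact Ex_const _ 1
      have h1 : Ex (bst n) (fun l => Ex (bst (n - n)) fun r => ((fchain 1 (node l r) : ℕ) : ℝ≥0∞)) = 1 := by
        simp only [Nat.sub_self, bst_zero, Ex_pure]
        have : ∀ l : BTree, ((fchain 1 (node l BTree.nil) : ℕ) : ℝ≥0∞) = 1 := by
          intro l; rw [fchain_one_node, if_pos (Or.inr rfl)]; simp
        simp only [this]
        exact Ex_const _ 1
      rw [h0, h1]
      norm_num
    · intro i h1i hin
      have : Ex (bst i) (fun l => Ex (bst (n - i)) fun r => ((fchain 1 (node l r) : ℕ) : ℝ≥0∞)) =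
          Ex (bst i) (fun _ => (0 : ℝ≥0∞)) := by
        refine Ex_congr _ _ _ fun l hl => ?_
        have hlnil : l ≠ BTree.nil := bst_pos_ne_nil h1i hl
        have : Ex (bst (n - i)) (fun r => ((fchain 1 (node l r) : ℕ) : ℝ≥0∞)) =
            Ex (bst (n - i)) (fun _ => (0 : ℝ≥0∞)) := by
          refine Ex_congr _ _ _ fun r hr => ?_
          have hrnil : r ≠ BTree.nil := bst_pos_ne_nil (n := n - i) (by omega) hr
          rw [fchain_one_node, if_neg (by tauto)]
          simp
        rw [this, Ex_const]
      rw [this, Ex_const]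

lemma EL_two_plus (k n : ℕ) :
    EL (k + 2) (n + 1) = (n + 1 : ℝ≥0∞)⁻¹ * (2 * EM (k + 1) n) := by
  rw [EL, Ex_bst_succ]
  congr 1
  have h0 : Ex (bst 0) (fun l => Ex (bst (n - 0)) fun r => ((fchain (k+2) (node l r) : ℕ) : ℝ≥0∞)) =
      EM (k + 1) n := by
    rw [bst_zero, Ex_pure, Nat.sub_zero, EM]
    refine Ex_congr _ _ _ fun r _ => ?_
    rw [fchain_succ_node, if_pos (Or.inl rfl), Fchain_nil, zero_add]
  rcases Nat.eq_zero_or_pos n with hn | hn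
  · subst hn
    rw [Finset.sum_range_one, h0, EM_zero]
    simp
  · rw [sum_ends _ n hn ?_]
    · have h1 : Ex (bst n) (fun l => Ex (bst (n - n)) fun r => ((fchain (k+2) (node l r) : ℕ) : ℝ≥0∞)) =
          EM (k + 1) n := by
        simp only [Nat.sub_self, bst_zero, Ex_pure, EM]
        refine Ex_congr _ _ _ fun l _ => ?_
        rw [fchain_succ_node, if_pos (Or.inr rfl), Fchain_nil, add_zero]
      rw [h0, h1, two_mul]
    · intro i h1i hin
      have : Ex (bst i) (fun l => Ex (bst (n - i)) fun r => ((fchain (k+2) (node l r) : ℕ) : ℝ≥0∞)) =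
          Ex (bst i) (fun _ => (0 : ℝ≥0∞)) := by
        refine Ex_congr _ _ _ fun l hl => ?_
        have hlnil : l ≠ BTree.nil := bst_pos_ne_nil h1i hl
        have : Ex (bst (n - i)) (fun r => ((fchain (k+2) (node l r) : ℕ) : ℝ≥0∞)) =
            Ex (bst (n - i)) (fun _ => (0 : ℝ≥0∞)) := by
          refine Ex_congr _ _ _ fun r hr => ?_
          have hrnil : r ≠ BTree.nil := bst_pos_ne_nil (n := n - i) (by omega) hr
          rw [fchain_succ_node, if_neg (by tauto)]
          simp
        rw [this, Ex_const]
      rw [this, Ex_const]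

lemma EM_rec (k n : ℕ) :
    EM k (n + 1) = EL k (n + 1) +
      (n + 1 : ℝ≥0∞)⁻¹ * (2 * ∑ i ∈ Finset.range (n + 1), EM k i) := by
  rw [EM, Ex_bst_succ]
  have key : ∀ i ∈ Finset.range (n + 1),
      Ex (bst i) (fun l => Ex (bst (n - i)) fun r => ((Fchain k (node l r) : ℕ) : ℝ≥0∞)) =
      Ex (bst i) (fun l => Ex (bst (n - i)) fun r => ((fchain k (node l r) : ℕ) : ℝ≥0∞))
        + EM k i + EM k (n - i) := by
    intro i _
    have step : ∀ l : BTree,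
        Ex (bst (n - i)) (fun r => ((Fchain k (node l r) : ℕ) : ℝ≥0∞)) =
        Ex (bst (n - i)) (fun r => ((fchain k (node l r) : ℕ) : ℝ≥0∞))
          + ((Fchain k l : ℕ) : ℝ≥0∞) + EM k (n - i) := by
      intro l
      have : (fun r => ((Fchain k (node l r) : ℕ) : ℝ≥0∞)) =
          fun r => (((fchain k (node l r) : ℕ) : ℝ≥0∞) + ((Fchain k l : ℕ) : ℝ≥0∞))
            + ((Fchain k r : ℕ) : ℝ≥0∞) := by
        funext r
        rw [Fchain_node]
        push_cast
        ring
      rw [this, Ex_add, Ex_add, Ex_const]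
      simp only [EM]
    have : (fun l => Ex (bst (n - i)) fun r => ((Fchain k (node l r) : ℕ) : ℝ≥0∞)) =
        fun l => (Ex (bst (n - i)) (fun r => ((fchain k (node l r) : ℕ) : ℝ≥0∞))
          + ((Fchain k l : ℕ) : ℝ≥0∞)) + EM k (n - i) := by
      funext l; rw [step l]
    rw [this, Ex_add, Ex_add, Ex_const]
    simp only [EM]
  rw [Finset.sum_congr rfl key]
  rw [Finset.sum_add_distrib, Finset.sum_add_distrib]
  have refl : ∑ i ∈ Finset.range (n + 1), EM k (n - i) = ∑ i ∈ Finset.range (n + 1), EM k i := by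
    have := Finset.sum_range_reflect (fun i => EM k i) (n + 1)
    simpa using this
  rw [refl, EL, Ex_bst_succ, mul_add, two_mul, mul_add]
  ring

lemma inv_ne_top (n : ℕ) : ((n : ℝ≥0∞) + 1)⁻¹ ≠ ⊤ := ENNReal.inv_ne_top.mpr (by simp)

lemma coe_toReal (n : ℕ) : ((n : ℝ≥0∞) + 1).toReal = (n : ℝ) + 1 := by
  rw [show ((n : ℝ≥0∞) + 1) = ((n + 1 : ℕ) : ℝ≥0∞) by push_cast; ring,
    ENNReal.toReal_natCast]
  push_cast; ring

lemma fin : ∀ n k, EM k n ≠ ⊤ ∧ EL k n ≠ ⊤ := by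
  intro n
  induction n using Nat.strong_induction_on with
  | _ n ih =>
    match n with
    | 0 => intro k; rw [EM_zero, EL_zero]; simp
    | n + 1 =>
      intro k
      have hL : ∀ j, EL j (n + 1) ≠ ⊤ := by
        intro j
        match j with
        | 0 => rw [EL_zero']; simp
        | 1 =>
          rw [EL_one]
          exact ENNReal.mul_ne_top (inv_ne_top n) (by split <;> simp)
        | j + 2 =>
          rw [EL_two_plus]
          exact ENNReal.mul_ne_top (inv_ne_top n)
            (ENNReal.mul_ne_top (by simp) ((ih n (by omega) (j + 1)).1))
      refine ⟨?_, hL k⟩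
      rw [EM_rec]
      refine ENNReal.add_ne_top.mpr ⟨hL k, ?_⟩
      refine ENNReal.mul_ne_top (inv_ne_top n) (ENNReal.mul_ne_top (by simp) ?_)
      exact (ENNReal.sum_lt_top.mpr fun i hi =>
        ((ih i (by simpa using hi) k).1).lt_top).ne

/-- real expectations -/
noncomputable def RL (k n : ℕ) : ℝ := (EL k n).toReal
noncomputable def RM (k n : ℕ) : ℝ := (EM k n).toReal

lemma RM_zero (k : ℕ) : RM k 0 = 0 := by rw [RM, EM_zero]; simp

lemma RL_one (n : ℕ) : RL 1 (n + 1) = (if n = 0 then 1 else 2) / (n + 1 : ℝ) := by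
  rw [RL, EL_one, ENNReal.toReal_mul, ENNReal.toReal_inv, coe_toReal]
  rcases eq_or_ne n 0 with h | h <;> simp [h] <;> ring

lemma RL_two_plus (k n : ℕ) : RL (k + 2) (n + 1) = 2 * RM (k + 1) n / (n + 1 : ℝ) := by
  rw [RL, EL_two_plus, ENNReal.toReal_mul, ENNReal.toReal_inv, coe_toReal,
    ENNReal.toReal_mul]
  simp only [RM, ENNReal.toReal_ofNat]
  ring

lemma RM_rec (k n : ℕ) :
    RM k (n + 1) = RL k (n + 1) + 2 * (∑ i ∈ Finset.range (n + 1), RM k i) / (n + 1 : ℝ) := by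
  rw [RM, EM_rec, ENNReal.toReal_add (fin _ _).2 (ENNReal.mul_ne_top (inv_ne_top n)
      (ENNReal.mul_ne_top (by simp)
        (ENNReal.sum_lt_top.mpr fun i _ => (fin _ _).1.lt_top).ne))]
  rw [ENNReal.toReal_mul, ENNReal.toReal_mul, ENNReal.toReal_inv, coe_toReal,
    ENNReal.toReal_sum (fun i _ => (fin _ _).1)]
  simp only [RL, RM, ENNReal.toReal_ofNat]
  ring

noncomputable def vv (k : ℕ) : ℝ := 2 ^ k / (2 * k.factorial)
noncomputable def aa (k : ℕ) : ℝ := vv k * ((k : ℝ) * (k + 3)) / (((k : ℝ) + 1) * ((k : ℝ) + 2))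
noncomputable def gg (k : ℕ) : ℝ := -(vv k * ((k : ℝ) ^ 2 + k - 4) / ((k : ℝ) + 2))
noncomputable def mm (k n : ℕ) : ℝ :=
  if n < k then 0 else if n = k then vv k else aa k * n + gg k

lemma mm_lt {k n : ℕ} (h : n < k) : mm k n = 0 := if_pos h
lemma mm_self (k : ℕ) : mm k k = vv k := by rw [mm, if_neg (by omega), if_pos rfl]
lemma mm_gt {k n : ℕ} (h : k < n) : mm k n = aa k * n + gg k := by
  rw [mm, if_neg (by omega), if_neg (by omega)]

lemma vv_pos (k : ℕ) : 0 < vv k := by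
  rw [vv]
  positivity

lemma fact_ne (k : ℕ) : ((k.factorial : ℝ)) ≠ 0 :=
  Nat.cast_ne_zero.mpr k.factorial_ne_zero

lemma vv_succ (k : ℕ) : vv (k + 1) = vv k * 2 / ((k : ℝ) + 1) := by
  rw [vv, vv, Nat.factorial_succ]
  push_cast
  field_simp
  ring

lemma sum_mm (k n : ℕ) : ∑ i ∈ Finset.range (n + 1), mm k i =
    if n < k then 0 else
      vv k + aa k * ((n : ℝ) * (n + 1) - (k : ℝ) * (k + 1)) / 2 + gg k * ((n : ℝ) - k) := by
  induction n with
  | zero =>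
    rw [Finset.sum_range_one, mm]
    rcases Nat.eq_zero_or_pos k with hk | hk
    · subst hk
      norm_num
    · rw [if_pos hk, if_pos hk]
  | succ n ihn =>
    rw [Finset.sum_range_succ, ihn]
    rcases lt_trichotomy (n + 1) k with h | h | h
    · rw [if_pos (by omega), if_pos h, mm, if_pos h, add_zero]
    · subst h
      rw [if_pos (by omega), if_neg (by omega), mm, if_neg (by omega), if_pos rfl, zero_add]
      push_cast
      ring
    · rw [if_neg (by omega), if_neg (by omega), mm, if_neg (by omega), if_neg (by omega)]
      push_cast
      ring

lemma RM_form : ∀ n k, RM (k + 1) n = mm (k + 1) n := by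
  intro n
  induction n using Nat.strong_induction_on with
  | _ n ih =>
    match n with
    | 0 =>
      intro k
      rw [RM_zero, mm, if_pos (by omega)]
    | n + 1 =>
      intro k
      have hRL : RL (k + 1) (n + 1) = 2 * mm k n / ((n : ℝ) + 1) := by
        match k with
        | 0 =>
          rw [RL_one]
          rcases eq_or_ne n 0 with hn | hn
          · subst hn
            norm_num [mm, vv]
          · rw [if_neg hn, mm, if_neg (by omega), if_neg hn, aa, gg, vv]
            norm_num
        | k + 1 =>
          rw [RL_two_plus, ih n (by omega) k]
      have hsum : ∑ i ∈ Finset.range (n + 1), RM (k + 1) i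
          = ∑ i ∈ Finset.range (n + 1), mm (k + 1) i :=
        Finset.sum_congr rfl fun i hi => ih i (by simpa using hi) k
      rw [RM_rec, hRL, hsum, sum_mm]
      rcases lt_trichotomy n k with h | h | h
      · rw [mm_lt (show n + 1 < k + 1 by omega), mm_lt h, if_pos (by omega : n < k + 1)]
        simp
      · subst h
        rw [mm_self, mm_self, if_pos (by omega : n < n + 1), vv_succ]
        have : (n : ℝ) + 1 ≠ 0 := by positivity
        field_simp
        ring
      · rw [mm_gt (show k + 1 < n + 1 by omega), mm_gt h, if_neg (by omega : ¬ n < k + 1)]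
        have h1 : (n : ℝ) + 1 ≠ 0 := by positivity
        have h2 : (k : ℝ) + 1 ≠ 0 := by positivity
        have h3 : (k : ℝ) + 2 ≠ 0 := by positivity
        have h4 : (k : ℝ) + 3 ≠ 0 := by positivity
        have hvv : vv (k + 1) = vv k * 2 / ((k : ℝ) + 1) := vv_succ k
        have hv0 : vv k ≠ 0 := (vv_pos k).ne'
        rw [aa, aa, gg, gg, hvv]
        push_cast
        field_simp
        ring

lemma RL_form (j n : ℕ) : RL (j + 1) (n + 1) = 2 * mm j n / ((n : ℝ) + 1) := by
  match j with
  | 0 =>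
    rw [RL_one]
    rcases eq_or_ne n 0 with hn | hn
    · subst hn
      norm_num [mm, vv]
    · rw [if_neg hn, mm, if_neg (by omega), if_neg hn, aa, gg, vv]
      norm_num
  | j + 1 =>
    rw [RL_two_plus, RM_form n j]

noncomputable def wR (n : ℕ) : ℝ := 2 / (((n : ℝ) + 2) * ((n : ℝ) + 3))

noncomputable def tailf (j N : ℕ) : ℝ :=
  (4 * aa j * ((N : ℝ) + 2) + 2 * gg j - 6 * aa j) / (((N : ℝ) + 1) * ((N : ℝ) + 2))

lemma term_nonneg (k n : ℕ) : 0 ≤ wR n * RL k (n + 1) := by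
  apply mul_nonneg
  · rw [wR]; positivity
  · exact ENNReal.toReal_nonneg

lemma partial_sum (j : ℕ) : ∀ N, j + 1 ≤ N →
    ∑ n ∈ Finset.range N, wR n * RL (j + 1) (n + 1) = aa (j + 1) - tailf j N := by
  refine Nat.le_induction ?_ ?_
  · rw [Finset.sum_range_succ]
    have hz : ∑ n ∈ Finset.range j, wR n * RL (j + 1) (n + 1) = 0 := by
      refine Finset.sum_eq_zero fun n hn => ?_
      rw [Finset.mem_range] at hn
      rw [RL_form, mm_lt hn]
      simp
    rw [hz, zero_add, RL_form, mm_self, wR, tailf, aa, gg, vv_succ, aa, vv]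
    have h1 : (j : ℝ) + 1 ≠ 0 := by positivity
    have h2 : (j : ℝ) + 2 ≠ 0 := by positivity
    have h3 : (j : ℝ) + 3 ≠ 0 := by positivity
    have h4 : (j : ℝ) + 4 ≠ 0 := by positivity
    have h5 : ((j.factorial : ℝ)) ≠ 0 := fact_ne j
    push_cast
    field_simp
    ring
  · intro N hN ihN
    rw [Finset.sum_range_succ, ihN, RL_form, mm_gt (by omega : j < N), wR, tailf, tailf]
    have h1 : (N : ℝ) + 1 ≠ 0 := by positivity
    have h2 : (N : ℝ) + 2 ≠ 0 := by positivity
    have h3 : (N : ℝ) + 3 ≠ 0 := by positivity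
    push_cast
    field_simp
    ring

lemma tail_tendsto (j : ℕ) : Filter.Tendsto (fun N => tailf j N) Filter.atTop (nhds 0) := by
  have h1 : Filter.Tendsto (fun N : ℕ => 1 / ((N : ℝ) + 1)) Filter.atTop (nhds 0) :=
    tendsto_one_div_add_atTop_nhds_zero_nat
  have h2 : Filter.Tendsto (fun N : ℕ => 1 / (((N : ℝ) + 1) * ((N : ℝ) + 2))) Filter.atTop (nhds 0) := by
    refine squeeze_zero (fun N => by positivity) (fun N => ?_) h1
    rw [div_le_div_iff₀ (by positivity) (by positivity)]
    nlinarith [Nat.cast_nonneg (α := ℝ) N]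
  have key : Filter.Tendsto (fun N : ℕ =>
      4 * aa j * (1 / ((N : ℝ) + 1)) + (2 * gg j - 6 * aa j) * (1 / (((N : ℝ) + 1) * ((N : ℝ) + 2))))
      Filter.atTop (nhds 0) := by
    have := ((h1.const_mul (4 * aa j)).add (h2.const_mul (2 * gg j - 6 * aa j)))
    simpa using this
  refine key.congr fun N => ?_
  rw [tailf]
  field_simp
  ring

lemma main_hasSum (j : ℕ) :
    HasSum (fun n => wR n * RL (j + 1) (n + 1)) (aa (j + 1)) := by
  rw [hasSum_iff_tendsto_nat_of_nonneg (fun n => term_nonneg (j + 1) n)]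
  have h0 : Filter.Tendsto (fun N => aa (j + 1) - tailf j N) Filter.atTop (nhds (aa (j + 1))) := by
    have := (tail_tendsto j).const_sub (aa (j + 1))
    simpa using this
  refine h0.congr' ?_
  filter_upwards [Filter.eventually_ge_atTop (j + 1)] with N hN
  exact (partial_sum j N hN).symm

lemma aa_nonneg (k : ℕ) : 0 ≤ aa k := by
  rw [aa, vv]
  positivity

end BTreeAux

open BTreeAux

open BTree in
/-- `E f_k(𝒯) = k(k+3)/((k+1)(k+2)) · 2^{k−1}/k! = 2^{k−1}/k! − 2^k/(k+2)!`. -/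
theorem expectation_fchain (k : ℕ) (hk : 1 ≤ k) :
    (∫ t, (fchain k t : ℝ) ∂cT
      = ((k : ℝ) * (k + 3)) / (((k : ℝ) + 1) * ((k : ℝ) + 2))
          * (2 ^ (k - 1) / (Nat.factorial k : ℝ))) ∧
    (∫ t, (fchain k t : ℝ) ∂cT
      = 2 ^ (k - 1) / (Nat.factorial k : ℝ) - 2 ^ k / (Nat.factorial (k + 2) : ℝ)) := by
  obtain ⟨j, rfl⟩ : ∃ j, k = j + 1 := ⟨k - 1, by omega⟩
  have main : ∫ t, (fchain (j + 1) t : ℝ) ∂cT = aa (j + 1) := by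
    rw [MeasureTheory.integral_eq_lintegral_of_nonneg_ae
      (Filter.Eventually.of_forall fun t => by positivity)
      ((meas _).aestronglyMeasurable)]
    have hint : ∫⁻ t, ENNReal.ofReal ((fchain (j + 1) t : ℝ)) ∂cT
        = ∑' n : ℕ, ENNReal.ofReal (wR n * RL (j + 1) (n + 1)) := by
      rw [cT, MeasureTheory.lintegral_sum_measure]
      refine tsum_congr fun n => ?_
      rw [MeasureTheory.lintegral_smul_measure]
      have h1 : ∫⁻ t, ENNReal.ofReal ((fchain (j + 1) t : ℝ)) ∂(bst (n + 1)).toMeasure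
          = EL (j + 1) (n + 1) := by
        rw [lintegral_toMeasure, EL]
        refine Ex_congr _ _ _ fun t _ => ?_
        rw [ENNReal.ofReal_natCast]
      rw [h1,
        show ENNReal.ofReal (2 / (((n : ℝ) + 2) * ((n : ℝ) + 3))) = ENNReal.ofReal (wR n) from
          by rw [wR],
        show EL (j + 1) (n + 1) = ENNReal.ofReal (RL (j + 1) (n + 1)) from
          (ENNReal.ofReal_toReal (fin _ _).2).symm,
        smul_eq_mul, ← ENNReal.ofReal_mul (p := wR n) (by rw [wR]; positivity)]
    rw [hint, ← ENNReal.ofReal_tsum_of_nonneg (fun n => term_nonneg (j + 1) n)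
      (main_hasSum j).summable, (main_hasSum j).tsum_eq,
      ENNReal.toReal_ofReal (aa_nonneg (j + 1))]
  have hfact : ((Nat.factorial (j + 1 + 2) : ℝ))
      = ((j : ℝ) + 3) * ((j : ℝ) + 2) * (Nat.factorial (j + 1) : ℝ) := by
    rw [show j + 1 + 2 = (j + 2) + 1 from rfl, Nat.factorial_succ, Nat.factorial_succ]
    push_cast
    ring
  have hf1 : ((Nat.factorial (j + 1) : ℝ)) ≠ 0 := fact_ne (j + 1)
  have e1 : aa (j + 1) = (((j : ℝ) + 1) * ((j : ℝ) + 1 + 3)) /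
      ((((j : ℝ) + 1) + 1) * (((j : ℝ) + 1) + 2)) * (2 ^ j / (Nat.factorial (j + 1) : ℝ)) := by
    rw [aa, vv, pow_succ]
    push_cast
    have h2 : (j : ℝ) + 2 ≠ 0 := by positivity
    have h3 : (j : ℝ) + 3 ≠ 0 := by positivity
    field_simp
  constructor
  · rw [main, Nat.add_sub_cancel, e1]
    push_cast
    ring
  · rw [main, Nat.add_sub_cancel, e1, hfact]
    have h2 : (j : ℝ) + 2 ≠ 0 := by positivity
    have h3 : (j : ℝ) + 3 ≠ 0 := by positivity
    push_cast
    field_simp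
    ring
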